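/- Let B be a finite bipartite graph with partite sets S and W, and let Δ be a positive integer such that every vertex of S has degree at most Δ in B. Let U = {u ∈ W : d_B(u) ≥ ⌈Δ/2⌉}. If B has a subgraph F₁ each of whose components is a path on 3 vertices whose middle vertex lies in S, with F₁ covering every vertex of S, then B has such a subgraph F (components are paths on 3 vertices centered in S, covering all of S) that additionally covers every vertex of U. -/

import Mathlib

/-- `F` is a `{P₃}`-packing of `B` centered in `S` and covering `S`: `F ≤ B`, every vertex
of `S` has degree 2 in `F`, and every covered vertex outside `S` (i.e. in the other partite
set) has degree 1 in `F`. Since `B` is bipartite with parts `S` and `W`, the components of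
such an `F` are exactly paths on 3 vertices with middle vertex in `S`. -/
def IsP3PackingCovering {V : Type*} (B : SimpleGraph V) (S : Set V) (F : SimpleGraph V) :
    Prop :=
  F ≤ B ∧ (∀ s ∈ S, (F.neighborSet s).ncard = 2) ∧
    (∀ u : V, u ∉ S → u ∈ F.support → (F.neighborSet u).ncard = 1)

set_option linter.unusedSectionVars false

section P3Aux
variable {V : Type*} [Fintype V]

def swapG (F : SimpleGraph V) (s w w' : V) : SimpleGraph V where
  Adj x y := (F.Adj x y ∧ ¬(x = s ∧ y = w') ∧ ¬(x = w' ∧ y = s)) ∨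
    (s ≠ w ∧ ((x = s ∧ y = w) ∨ (x = w ∧ y = s)))
  symm := by
    constructor
    rintro x y (⟨h, h1, h2⟩ | ⟨hne, h⟩)
    · exact Or.inl ⟨h.symm, by tauto, by tauto⟩
    · exact Or.inr ⟨hne, by tauto⟩
  loopless := by
    constructor
    rintro x (⟨h, _, _⟩ | ⟨hne, (⟨h1, h2⟩ | ⟨h1, h2⟩)⟩)
    · exact F.loopless.irrefl x h
    · exact hne (h1.symm.trans h2)
    · exact hne (h2.symm.trans h1)

lemma swapG_adj (F : SimpleGraph V) (s w w' : V) (hsw : s ≠ w) (x y : V) :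
    (swapG F s w w').Adj x y ↔ (F.Adj x y ∧ ¬(x = s ∧ y = w') ∧ ¬(x = w' ∧ y = s)) ∨
      ((x = s ∧ y = w) ∨ (x = w ∧ y = s)) := by
  simp only [swapG]; tauto

lemma swap_spec (B : SimpleGraph V) (S W : Set V)
    (hdisj : Disjoint S W)
    (hbip : ∀ u v : V, B.Adj u v → (u ∈ S ∧ v ∈ W) ∨ (u ∈ W ∧ v ∈ S)) (F : SimpleGraph V) (hF : IsP3PackingCovering B S F)
    (w s w' : V) (hwW : w ∈ W) (hwuncov : w ∉ F.support)
    (hadj : B.Adj w s) (hFadj : F.Adj s w') :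
    ∃ F' : SimpleGraph V, IsP3PackingCovering B S F' ∧ w ∈ F'.support ∧ w' ∉ F'.support ∧
      (∀ x ∈ F.support, x ≠ w' → x ∈ F'.support) ∧
      (∀ x y : V, F'.Adj x y ↔ (F.Adj x y ∧ ¬(x = s ∧ y = w') ∧ ¬(x = w' ∧ y = s)) ∨
        ((x = s ∧ y = w) ∨ (x = w ∧ y = s))) := by
  obtain ⟨hle, hdeg2, hdeg1⟩ := hF
  have hnotWS : ∀ x, x ∈ W → x ∉ S := fun x hx => Set.disjoint_right.mp hdisj hx
  have hsS : s ∈ S := by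
    rcases hbip _ _ hadj with ⟨h1, h2⟩ | ⟨h1, h2⟩
    · exact absurd h1 (hnotWS w hwW)
    · exact h2
  have hw'W : w' ∈ W := by
    rcases hbip _ _ (hle hFadj) with ⟨h1, h2⟩ | ⟨h1, h2⟩
    · exact h2
    · exact (hnotWS s h1 hsS).elim
  have hw'S : w' ∉ S := hnotWS w' hw'W
  have hsW : s ∉ W := Set.disjoint_left.mp hdisj hsS
  have hsw : s ≠ w := by rintro rfl; exact hsW hwW
  have hsw' : s ≠ w' := by rintro rfl; exact hsW hw'W
  have hno : ∀ y, ¬ F.Adj w y := by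
    intro y hy; exact hwuncov (F.mem_support.mpr ⟨y, hy⟩)
  have hww' : w ≠ w' := by rintro rfl; exact hno s hFadj.symm
  have hNw' : F.neighborSet w' = {s} := by
    have h1 : (F.neighborSet w').ncard = 1 :=
      hdeg1 w' hw'S (F.mem_support.mpr ⟨s, hFadj.symm⟩)
    obtain ⟨a, ha⟩ := Set.ncard_eq_one.mp h1
    have hs : s ∈ F.neighborSet w' := hFadj.symm
    rw [ha] at hs ⊢
    rw [Set.mem_singleton_iff.mp hs]
  have hN' : ∀ y, F.Adj w' y → y = s := by
    intro y hy
    have : y ∈ F.neighborSet w' := hy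
    rw [hNw'] at this; exact this
  set F' := swapG F s w w' with hF'
  have hAdj := swapG_adj F s w w' hsw
  have n1 : ∀ x, x ≠ s → x ≠ w → x ≠ w' → F'.neighborSet x = F.neighborSet x := by
    intro x hxs hxw hxw'
    ext y
    rw [SimpleGraph.mem_neighborSet, SimpleGraph.mem_neighborSet, hAdj]
    tauto
  have n2 : F'.neighborSet s = insert w (F.neighborSet s \ {w'}) := by
    ext y
    rw [SimpleGraph.mem_neighborSet, hAdj]
    simp only [Set.mem_insert_iff, Set.mem_diff, SimpleGraph.mem_neighborSet,
      Set.mem_singleton_iff]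
    constructor
    · rintro (⟨h, h1, h2⟩ | (⟨_, rfl⟩ | ⟨h1, h2⟩))
      · exact Or.inr ⟨h, fun hy => h1 ⟨by trivial, hy⟩⟩
      · exact Or.inl rfl
      · exact absurd h1 hsw
    · rintro (rfl | ⟨h, hy⟩)
      · tauto
      · exact Or.inl ⟨h, fun hc => hy hc.2, fun hc => hsw' hc.1⟩
  have n3 : F'.neighborSet w = {s} := by
    ext y
    rw [SimpleGraph.mem_neighborSet, hAdj]
    simp only [Set.mem_singleton_iff]
    constructor
    · rintro (⟨h, _, _⟩ | (⟨h1, _⟩ | ⟨_, rfl⟩))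
      · exact absurd h (hno y)
      · exact absurd h1.symm hsw
      · rfl
    · rintro rfl
      tauto
  have n4 : F'.neighborSet w' = ∅ := by
    ext y
    rw [SimpleGraph.mem_neighborSet, hAdj]
    simp only [Set.mem_empty_iff_false, iff_false]
    rintro (⟨h, _, h2⟩ | (⟨h1, _⟩ | ⟨h1, _⟩))
    · exact h2 ⟨by trivial, hN' y h⟩
    · exact hsw' h1.symm
    · exact hww' h1.symm
  have hwsupp : w ∈ F'.support := by
    refine F'.mem_support.mpr ⟨s, ?_⟩
    rw [hAdj]; tauto
  have hw'supp : w' ∉ F'.support := by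
    intro h
    obtain ⟨y, hy⟩ := F'.mem_support.mp h
    have : y ∈ F'.neighborSet w' := hy
    rw [n4] at this; exact this
  refine ⟨F', ⟨?_, ?_, ?_⟩, hwsupp, hw'supp, ?_, fun x y => hAdj x y⟩
  · -- F' ≤ B
    intro x y hxy
    rw [hAdj] at hxy
    rcases hxy with ⟨h, _, _⟩ | (⟨rfl, rfl⟩ | ⟨rfl, rfl⟩)
    · exact hle h
    · exact hadj.symm
    · exact hadj
  · -- degree 2 on S
    intro x hx
    by_cases hxs : x = s
    · subst hxs
      have hmem : w' ∈ F.neighborSet x := hFadj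
      rw [n2, Set.ncard_insert_of_notMem, Set.ncard_diff_singleton_of_mem hmem,
        hdeg2 x hx]
      rintro ⟨hmem, -⟩
      exact hno x hmem.symm
    · have hxw : x ≠ w := by rintro rfl; exact hnotWS x hwW hx
      have hxw' : x ≠ w' := by rintro rfl; exact hnotWS x hw'W hx
      rw [n1 x hxs hxw hxw']
      exact hdeg2 x hx
  · -- degree 1 off S
    intro x hxS hxsupp
    by_cases hxw : x = w
    · subst hxw; rw [n3]; exact Set.ncard_singleton s
    · by_cases hxw' : x = w'
      · exact absurd (hxw' ▸ hxsupp) hw'supp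
      · have hxs : x ≠ s := by rintro rfl; exact hxS hsS
        rw [n1 x hxs hxw hxw']
        refine hdeg1 x hxS ?_
        obtain ⟨y, hy⟩ := F'.mem_support.mp hxsupp
        have : y ∈ F'.neighborSet x := hy
        rw [n1 x hxs hxw hxw'] at this
        exact F.mem_support.mpr ⟨y, this⟩
  · -- support preservation
    intro x hxsupp hxw'
    by_cases hxs : x = s
    · subst hxs
      refine F'.mem_support.mpr ⟨w, ?_⟩
      rw [hAdj]; tauto
    · have hxw : x ≠ w := by rintro rfl; exact hwuncov hxsupp
      obtain ⟨y, hy⟩ := F.mem_support.mp hxsupp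
      refine F'.mem_support.mpr ⟨y, ?_⟩
      have : y ∈ F.neighborSet x := hy
      rw [← n1 x hxs hxw hxw'] at this
      exact this

def Esc (U : Set V) (B F : SimpleGraph V) : ℕ → V → Prop
  | 0, w => w ∉ U
  | (k+1), w => w ∉ U ∨ ∃ s w', B.Adj w s ∧ F.Adj s w' ∧ Esc U B F k w'

lemma esc_zero (U : Set V) (B F : SimpleGraph V) (w : V) : Esc U B F 0 w ↔ w ∉ U := Iff.rfl

lemma esc_succ (U : Set V) (B F : SimpleGraph V) (k : ℕ) (w : V) :
    Esc U B F (k+1) w ↔ w ∉ U ∨ ∃ s w', B.Adj w s ∧ F.Adj s w' ∧ Esc U B F k w' := Iff.rfl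

lemma esc_swap (B F F' : SimpleGraph V) (S W U : Set V)
    (hdisj : Disjoint S W)
    (hbip : ∀ u v : V, B.Adj u v → (u ∈ S ∧ v ∈ W) ∨ (u ∈ W ∧ v ∈ S))
    (hUW : U ⊆ W) (s w w' : V) (hw'W : w' ∈ W)
    (hAdj : ∀ x y : V, F'.Adj x y ↔ (F.Adj x y ∧ ¬(x = s ∧ y = w') ∧ ¬(x = w' ∧ y = s)) ∨
      ((x = s ∧ y = w) ∨ (x = w ∧ y = s)))
    (m : ℕ) (hmin : ∀ j, Esc U B F j w' → m ≤ j) :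
    ∀ j, j ≤ m → ∀ x, Esc U B F j x → Esc U B F' j x := by
  intro j
  induction j with
  | zero => intro _ x h; exact h
  | succ j IH =>
    intro hjm x hx
    rw [esc_succ] at hx ⊢
    rcases hx with h | ⟨t, y, hxt, hty, hy⟩
    · exact Or.inl h
    by_cases hxU : x ∈ U
    · have hxW : x ∈ W := hUW hxU
      have htS : t ∈ S := by
        rcases hbip _ _ hxt with ⟨h1, h2⟩ | ⟨h1, h2⟩
        · exact absurd h1 (Set.disjoint_right.mp hdisj hxW)
        · exact h2
      have htw' : t ≠ w' := by
        rintro rfl; exact Set.disjoint_left.mp hdisj htS hw'W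
      by_cases hc : t = s ∧ y = w'
      · obtain ⟨rfl, rfl⟩ := hc
        exact absurd (hmin j hy) (by omega)
      · refine Or.inr ⟨t, y, hxt, ?_, IH (by omega) y hy⟩
        rw [hAdj]
        exact Or.inl ⟨hty, hc, fun hc2 => htw' hc2.1⟩
    · exact Or.inl hxU

lemma esc_exists (B : SimpleGraph V) [DecidableRel B.Adj] (S W : Set V)
    (hdisj : Disjoint S W)
    (hbip : ∀ u v : V, B.Adj u v → (u ∈ S ∧ v ∈ W) ∨ (u ∈ W ∧ v ∈ S))
    (Δ : ℕ) (hΔ : 0 < Δ) (hdegS : ∀ s ∈ S, B.degree s ≤ Δ)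
    (U : Set V) (hU : U = {u ∈ W | (Δ + 1) / 2 ≤ B.degree u})
    (F : SimpleGraph V) (hF : IsP3PackingCovering B S F)
    (u : V) (huU : u ∈ U) (huncov : u ∉ F.support) : ∃ k, Esc U B F k u := by
  classical
  by_contra hcon
  push_neg at hcon
  obtain ⟨hle, hdeg2, hdeg1⟩ := hF
  set c := (Δ + 1) / 2 with hc
  set T : Finset V := Finset.univ.filter (fun t => ∀ k, ¬ Esc U B F k t) with hT
  have hTU : ∀ t ∈ T, t ∈ U := by
    intro t ht
    by_contra h
    exact (Finset.mem_filter.mp ht).2 0 h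
  have huT : u ∈ T := Finset.mem_filter.mpr ⟨Finset.mem_univ _, hcon⟩
  set S' : Finset V := Finset.univ.filter (fun s => s ∈ S ∧ ∃ t ∈ T, B.Adj t s) with hS'
  have hS'S : ∀ s ∈ S', s ∈ S := fun s hs => (Finset.mem_filter.mp hs).2.1
  have h1 : ∀ t ∈ T, ∀ y, B.Adj t y → y ∈ S' := by
    intro t ht y hy
    have htW : t ∈ W := by have := hTU t ht; rw [hU] at this; exact this.1
    have hyS : y ∈ S := by
      rcases hbip _ _ hy with ⟨h1, h2⟩ | ⟨h1, h2⟩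
      · exact absurd h1 (Set.disjoint_right.mp hdisj htW)
      · exact h2
    exact Finset.mem_filter.mpr ⟨Finset.mem_univ _, hyS, t, ht, hy⟩
  have h2 : ∀ s ∈ S', ∀ y, F.Adj s y → y ∈ T := by
    intro s hs y hy
    obtain ⟨-, hsS, t, ht, hadj⟩ := Finset.mem_filter.mp hs
    refine Finset.mem_filter.mpr ⟨Finset.mem_univ _, fun k hk => ?_⟩
    exact (Finset.mem_filter.mp ht).2 (k + 1) (Or.inr ⟨s, y, hadj, hy, hk⟩)
  -- the F-neighbors of S'
  set T' : Finset V := S'.biUnion (fun s => (F.neighborSet s).toFinset) with hT'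
  have hdisjNbr : ∀ s₁ ∈ S', ∀ s₂ ∈ S', s₁ ≠ s₂ →
      Disjoint (F.neighborSet s₁).toFinset (F.neighborSet s₂).toFinset := by
    intro s₁ hs₁ s₂ hs₂ hne
    rw [Finset.disjoint_left]
    intro y hy₁ hy₂
    rw [Set.mem_toFinset] at hy₁ hy₂
    have hyW : y ∈ W := by
      rcases hbip _ _ (hle hy₁) with ⟨ha, hb⟩ | ⟨ha, hb⟩
      · exact hb
      · exact absurd (hS'S s₁ hs₁) (Set.disjoint_right.mp hdisj ha)
    have hyS : y ∉ S := Set.disjoint_right.mp hdisj hyW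
    have hysupp : y ∈ F.support := F.mem_support.mpr ⟨s₁, hy₁.symm⟩
    have hcard := hdeg1 y hyS hysupp
    have hsub : ({s₁, s₂} : Set V) ⊆ F.neighborSet y := by
      rintro z (rfl | rfl)
      · exact hy₁.symm
      · exact hy₂.symm
    have := Set.ncard_le_ncard hsub (Set.toFinite _)
    rw [Set.ncard_pair hne, hcard] at this
    omega
  have hcardT' : T'.card = 2 * S'.card := by
    rw [hT', Finset.card_biUnion hdisjNbr]
    rw [Finset.sum_congr rfl (fun s hs => ?_), Finset.sum_const, smul_eq_mul, mul_comm]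
    rw [← Set.ncard_eq_toFinset_card']
    exact hdeg2 s (hS'S s hs)
  have hT'T : T' ⊆ T := by
    intro y hy
    obtain ⟨s, hs, hy⟩ := Finset.mem_biUnion.mp hy
    rw [Set.mem_toFinset] at hy
    exact h2 s hs y hy
  have huT' : u ∉ T' := by
    intro h
    obtain ⟨s, hs, hmem⟩ := Finset.mem_biUnion.mp h
    rw [Set.mem_toFinset] at hmem
    exact huncov (F.mem_support.mpr ⟨s, hmem.symm⟩)
  have hTcard : 2 * S'.card + 1 ≤ T.card := by
    have hsub : insert u T' ⊆ T := by
      intro x hx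
      rcases Finset.mem_insert.mp hx with rfl | hx
      · exact huT
      · exact hT'T hx
    have := Finset.card_le_card hsub
    rw [Finset.card_insert_of_notMem huT', hcardT'] at this
    omega
  -- double counting
  have hdegT : ∀ t ∈ T, c ≤ B.degree t := by
    intro t ht
    have := hTU t ht
    rw [hU] at this
    exact this.2
  have sum1 : T.card * c ≤ ∑ t ∈ T, B.degree t := by
    have := Finset.card_nsmul_le_sum T (fun t => B.degree t) c hdegT
    simpa [smul_eq_mul] using this
  have sum2 : ∀ t ∈ T, B.degree t = (S'.filter (fun s => B.Adj t s)).card := by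
    intro t ht
    rw [← SimpleGraph.card_neighborFinset_eq_degree]
    congr 1
    ext y
    simp only [Finset.mem_filter, SimpleGraph.mem_neighborFinset]
    exact ⟨fun hh => ⟨h1 t ht y hh, hh⟩, fun hh => hh.2⟩
  have sum3 : ∑ t ∈ T, (S'.filter (fun s => B.Adj t s)).card
      = ∑ s ∈ S', (T.filter (fun t => B.Adj t s)).card := by
    simp only [Finset.card_filter]
    exact Finset.sum_comm
  have sum4 : ∀ s ∈ S', (T.filter (fun t => B.Adj t s)).card ≤ B.degree s := by
    intro s hs
    rw [← SimpleGraph.card_neighborFinset_eq_degree]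
    apply Finset.card_le_card
    intro t ht
    rw [SimpleGraph.mem_neighborFinset]
    exact (Finset.mem_filter.mp ht).2.symm
  have sum5 : ∑ s ∈ S', B.degree s ≤ S'.card * Δ := by
    have := Finset.sum_le_card_nsmul S' (fun s => B.degree s) Δ
      (fun s hs => hdegS s (hS'S s hs))
    simpa [smul_eq_mul] using this
  have key : T.card * c ≤ S'.card * Δ := by
    calc T.card * c ≤ ∑ t ∈ T, B.degree t := sum1
      _ = ∑ t ∈ T, (S'.filter (fun s => B.Adj t s)).card := Finset.sum_congr rfl sum2
      _ = ∑ s ∈ S', (T.filter (fun t => B.Adj t s)).card := sum3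
      _ ≤ ∑ s ∈ S', B.degree s := Finset.sum_le_sum sum4
      _ ≤ S'.card * Δ := sum5
  have hc1 : 1 ≤ c := by omega
  have hΔ2c : Δ ≤ 2 * c := by omega
  have : (2 * S'.card + 1) * c ≤ T.card * c := Nat.mul_le_mul_right c hTcard
  nlinarith [key, this, Nat.mul_le_mul_left S'.card hΔ2c]

lemma augment (B : SimpleGraph V) [DecidableRel B.Adj] (S W : Set V)
    (hdisj : Disjoint S W)
    (hbip : ∀ u v : V, B.Adj u v → (u ∈ S ∧ v ∈ W) ∨ (u ∈ W ∧ v ∈ S))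
    (U : Set V) (hUW : U ⊆ W) :
    ∀ (k : ℕ) (F : SimpleGraph V) (w : V), IsP3PackingCovering B S F → w ∉ F.support →
      Esc U B F k w →
      ∃ F' : SimpleGraph V, IsP3PackingCovering B S F' ∧
        (∀ x, x ∈ F.support → x ∈ U → x ∈ F'.support) ∧ (w ∈ U → w ∈ F'.support) := by
  intro k
  induction k using Nat.strong_induction_on with
  | _ k IH =>
  intro F w hF hwuncov hesc
  classical
  by_cases hwU : w ∈ U
  swap
  · exact ⟨F, hF, fun x hx _ => hx, fun h => absurd h hwU⟩
  have hex : ∃ m, Esc U B F m w := ⟨k, hesc⟩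
  have hmesc : Esc U B F (Nat.find hex) w := Nat.find_spec hex
  have hmle : Nat.find hex ≤ k := Nat.find_min' hex hesc
  obtain ⟨m', hm'⟩ : ∃ m', Nat.find hex = m' + 1 := by
    cases hEq : Nat.find hex with
    | zero => rw [hEq] at hmesc; exact absurd hwU hmesc
    | succ m' => exact ⟨m', rfl⟩
  rw [hm'] at hmesc hmle
  rcases (esc_succ U B F m' w).mp hmesc with h | ⟨s, w', hadj, hFadj, hesc'⟩
  · exact absurd hwU h
  have hmin' : ∀ j, Esc U B F j w' → m' ≤ j := by
    intro j hj
    have hstep : Esc U B F (j + 1) w := Or.inr ⟨s, w', hadj, hFadj, hj⟩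
    have := Nat.find_min' hex hstep
    omega
  have hwW : w ∈ W := hUW hwU
  obtain ⟨F', hF', hwsupp, hw'supp, hpres, hAdj⟩ :=
    swap_spec B S W hdisj hbip F hF w s w' hwW hwuncov hadj hFadj
  have hsS : s ∈ S := by
    rcases hbip _ _ hadj with ⟨h1, h2⟩ | ⟨h1, h2⟩
    · exact absurd h1 (Set.disjoint_right.mp hdisj hwW)
    · exact h2
  have hw'W : w' ∈ W := by
    rcases hbip _ _ (hF.1 hFadj) with ⟨h1, h2⟩ | ⟨h1, h2⟩
    · exact h2
    · exact absurd hsS (Set.disjoint_right.mp hdisj h1)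
  have hescF' : Esc U B F' m' w' :=
    esc_swap B F F' S W U hdisj hbip hUW s w w' hw'W hAdj m' hmin' m' le_rfl w' hesc'
  obtain ⟨F'', hF'', hpres', hw'cov⟩ := IH m' (by omega) F' w' hF' hw'supp hescF'
  refine ⟨F'', hF'', ?_, fun _ => hpres' w hwsupp hwU⟩
  intro x hx hxU
  by_cases hxw' : x = w'
  · subst hxw'; exact hw'cov hxU
  · exact hpres' x (hpres x hx hxw') hxU

end P3Aux

/-- If `B` is bipartite with parts `S` and `W`, every vertex of `S` has degree at most `Δ`,
and `U = {u ∈ W : d_B(u) ≥ ⌈Δ/2⌉}`, then the existence of a `{P₃}`-packing (with paths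
centered in `S`) covering `S` implies the existence of one covering `S ∪ U`. -/
theorem p3_packing_covering_U {V : Type*} [Fintype V]
    (B : SimpleGraph V) [DecidableRel B.Adj] (S W : Set V)
    (hpart : ∀ v : V, v ∈ S ∨ v ∈ W) (hdisj : Disjoint S W)
    (hbip : ∀ u v : V, B.Adj u v → (u ∈ S ∧ v ∈ W) ∨ (u ∈ W ∧ v ∈ S))
    (Δ : ℕ) (hΔ : 0 < Δ) (hdegS : ∀ s ∈ S, B.degree s ≤ Δ)
    (U : Set V) (hU : U = {u ∈ W | (Δ + 1) / 2 ≤ B.degree u})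
    (F₁ : SimpleGraph V) (hF₁ : IsP3PackingCovering B S F₁) :
    ∃ F : SimpleGraph V, IsP3PackingCovering B S F ∧ U ⊆ F.support := by
  classical
  have hUW : U ⊆ W := by rw [hU]; exact Set.sep_subset _ _
  suffices h : ∀ (n : ℕ) (F : SimpleGraph V), IsP3PackingCovering B S F →
      ((U \ F.support).toFinset).card ≤ n →
      ∃ F' : SimpleGraph V, IsP3PackingCovering B S F' ∧ U ⊆ F'.support by
    exact h ((U \ F₁.support).toFinset).card F₁ hF₁ le_rfl
  intro n
  induction n with
  | zero =>
    intro F hF hcard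
    refine ⟨F, hF, ?_⟩
    have : (U \ F.support).toFinset = ∅ := Finset.card_eq_zero.mp (Nat.le_zero.mp hcard)
    rw [Set.toFinset_eq_empty] at this
    exact Set.diff_eq_empty.mp this
  | succ n IHn =>
    intro F hF hcard
    by_cases hcov : U ⊆ F.support
    · exact ⟨F, hF, hcov⟩
    obtain ⟨u, huU, hunc⟩ := Set.not_subset.mp hcov
    obtain ⟨k, hesc⟩ := esc_exists B S W hdisj hbip Δ hΔ hdegS U hU F hF u huU hunc
    obtain ⟨F', hF', hpres, hucov⟩ := augment B S W hdisj hbip U hUW k F u hF hunc hesc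
    apply IHn F' hF'
    have humem : u ∈ (U \ F.support).toFinset := Set.mem_toFinset.mpr ⟨huU, hunc⟩
    have hsub : (U \ F'.support).toFinset ⊆ ((U \ F.support).toFinset).erase u := by
      intro x hx
      rw [Set.mem_toFinset] at hx
      obtain ⟨hxU, hxsupp⟩ := hx
      refine Finset.mem_erase.mpr ⟨?_, Set.mem_toFinset.mpr ⟨hxU, fun hs => ?_⟩⟩
      · rintro rfl
        exact hxsupp (hucov huU)
      · exact hxsupp (hpres x hs hxU)
    have h1 := Finset.card_le_card hsub
    have h2 := Finset.card_erase_of_mem humem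
    have h3 := Finset.card_pos.mpr ⟨u, humem⟩
    omega
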